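/- MAV satisfies weak support monotonicity without population increase: if W is a winning MAV committee containing nonempty G and voter i with A_i ∩ G = ∅ changes her ballot to A_i ∪ G, then some winning committee of the new election intersects G; if all winning committees of E contain G then all winning committees of the new election intersect G. -/
import Mathlib


open Finset

variable {C : Type*} [Fintype C] [DecidableEq C]

/-- The Hamming distance between two finite sets. -/
def ham (A B : Finset C) : ℕ := (A \ B).card + (B \ A).card

/-- The MAV cost of `W`: the maximum Hamming distance between `W` and a ballot. -/
def mavCost {V : Type*} [Fintype V] (A : V → Finset C) (W : Finset C) : ℕ :=
  univ.sup fun i : V => ham W (A i)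

/-- `W` is a winning committee of Minimax Approval Voting for `(A, k)`. -/
def isMAVWinner {V : Type*} [Fintype V] (A : V → Finset C) (k : ℕ) (W : Finset C) : Prop :=
  W.card = k ∧ ∀ W' : Finset C, W'.card = k → mavCost A W ≤ mavCost A W'

/-- MAV satisfies weak support monotonicity without population increase. -/
theorem mav_weak_SMWOPI {V : Type*} [Fintype V] [DecidableEq V]
    (A : V → Finset C) (k : ℕ) (hk : 1 ≤ k) (hkC : k ≤ Fintype.card C)
    (G : Finset C) (hG : G.Nonempty) (hGk : G.card ≤ k)
    (i : V) (hiG : A i ∩ G = ∅)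
    (W : Finset C) (hW : isMAVWinner A k W) (hGW : G ⊆ W) :
    (∃ W' : Finset C, isMAVWinner (Function.update A i (A i ∪ G)) k W' ∧
        (W' ∩ G).Nonempty) ∧
    ((∀ W₀ : Finset C, isMAVWinner A k W₀ → G ⊆ W₀) →
      ∀ W' : Finset C, isMAVWinner (Function.update A i (A i ∪ G)) k W' →
        (W' ∩ G).Nonempty) := by

  set A' := Function.update A i (A i ∪ G) with hA'
  have L1 : ∀ Z : Finset C, G ⊆ Z → mavCost A' Z ≤ mavCost A Z := by
    intro Z hGZ
    apply Finset.sup_mono_fun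
    intro j _
    rcases eq_or_ne j i with rfl | hj
    · simp only [hA', Function.update_self]
      unfold ham
      refine add_le_add (card_le_card ?_) (card_le_card ?_)
      · exact sdiff_subset_sdiff (le_refl Z) subset_union_left
      · intro x hx
        simp only [mem_sdiff, mem_union] at hx ⊢
        rcases hx.1 with h | h
        · exact ⟨h, hx.2⟩
        · exact absurd (hGZ h) hx.2
    · simp [hA', Function.update_of_ne hj]
  have L2 : ∀ Z : Finset C, Z ∩ G = ∅ → mavCost A Z ≤ mavCost A' Z := by
    intro Z hZG
    apply Finset.sup_mono_fun
    intro j _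
    rcases eq_or_ne j i with rfl | hj
    · simp only [hA', Function.update_self]
      unfold ham
      refine add_le_add (card_le_card ?_) (card_le_card ?_)
      · intro x hx
        simp only [mem_sdiff, mem_union] at hx ⊢
        refine ⟨hx.1, fun hc => ?_⟩
        rcases hc with hc | hc
        · exact hx.2 hc
        · have : x ∈ Z ∩ G := mem_inter.2 ⟨hx.1, hc⟩
          simp [hZG] at this
      · exact sdiff_subset_sdiff subset_union_left (le_refl Z)
    · simp [hA', Function.update_of_ne hj]
  obtain ⟨W'', hW''card, hW''min⟩ :
      ∃ Z : Finset C, Z.card = k ∧ ∀ X : Finset C, X.card = k → mavCost A' Z ≤ mavCost A' X := by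
    obtain ⟨s, hs⟩ : ((univ : Finset C).powersetCard k).Nonempty := by
      rw [Finset.powersetCard_nonempty]
      simpa using hkC
    obtain ⟨Z, hZ, hmin⟩ := Finset.exists_min_image ((univ : Finset C).powersetCard k)
      (mavCost A') ⟨s, hs⟩
    refine ⟨Z, (mem_powersetCard.1 hZ).2, fun X hX => ?_⟩
    exact hmin X (mem_powersetCard.2 ⟨subset_univ X, hX⟩)
  constructor
  · by_cases h : (W'' ∩ G).Nonempty
    · exact ⟨W'', ⟨hW''card, hW''min⟩, h⟩
    · have hW''G : W'' ∩ G = ∅ := not_nonempty_iff_eq_empty.1 h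
      refine ⟨W, ⟨hW.1, fun X hX => ?_⟩, ?_⟩
      · calc mavCost A' W ≤ mavCost A W := L1 W hGW
          _ ≤ mavCost A W'' := hW.2 W'' hW''card
          _ ≤ mavCost A' W'' := L2 W'' hW''G
          _ ≤ mavCost A' X := hW''min X hX
      · obtain ⟨g, hg⟩ := hG
        exact ⟨g, mem_inter.2 ⟨hGW hg, hg⟩⟩
  · intro hall W' hW'
    by_contra h
    have hW'G : W' ∩ G = ∅ := not_nonempty_iff_eq_empty.1 h
    have hwin : isMAVWinner A k W' := by
      refine ⟨hW'.1, fun X hX => ?_⟩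
      calc mavCost A W' ≤ mavCost A' W' := L2 W' hW'G
        _ ≤ mavCost A' W := hW'.2 W hW.1
        _ ≤ mavCost A W := L1 W hGW
        _ ≤ mavCost A X := hW.2 X hX
    obtain ⟨g, hg⟩ := hG
    have : g ∈ W' ∩ G := mem_inter.2 ⟨hall W' hwin hg, hg⟩
    simp [hW'G] at this
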